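/- If 𝔄 is a model of φ = ∃z ∀x ∃y₁…∃y_n ψ over relational σ with z-witness a₀ of 1-type π₀, then the set Φ of 1-types realized in 𝔄 has the property: π₀ ∈ Φ, and for every π ∈ Φ there exists a π-witness (𝔠,f) for π₀ and ψ such that every element of 𝔠 realizes a 1-type in Φ. -/
import Mathlib


open FirstOrder Language Structure

/-- The 1-type realized by `a`. -/
def tp {L : FirstOrder.Language} {M : Type*} [L.Structure M] (a : M) :
    ∀ n, L.Relations n → Prop :=
  fun _ R => RelMap R (fun _ => a)

lemma term_eq_var {L : FirstOrder.Language} [L.IsRelational] {β : Type*}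
    (t : L.Term β) : ∃ p, t = FirstOrder.Language.Term.var p := by
  cases t with
  | var p => exact ⟨p, rfl⟩
  | func f _ => exact isEmptyElim f

lemma realize_pull {L : FirstOrder.Language} [L.IsRelational]
    {C : Type} {M : Type*} [L.Structure C] [L.Structure M] (h : C → M)
    (hrel : ∀ (k : ℕ) (R : L.Relations k) (w : Fin k → C),
      RelMap R w ↔ RelMap R (h ∘ w))
    {m k : ℕ} {φ : L.BoundedFormula (Fin m) k} (hφ : φ.IsQF)
    (v : Fin m → C) (xs : Fin k → C)
    (hinj : ∀ p q : Fin m ⊕ Fin k,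
      h (Sum.elim v xs p) = h (Sum.elim v xs q) → Sum.elim v xs p = Sum.elim v xs q) :
    φ.Realize v xs ↔ φ.Realize (h ∘ v) (h ∘ xs) := by
  have helim : Sum.elim (h ∘ v) (h ∘ xs) = h ∘ Sum.elim v xs := by
    funext p; cases p <;> rfl
  induction hφ with
  | falsum => exact Iff.rfl
  | imp _ _ ih1 ih2 =>
    simp only [BoundedFormula.realize_imp, ih1, ih2]
  | of_isAtomic ha =>
    cases ha with
    | equal t₁ t₂ =>
      obtain ⟨p, rfl⟩ := term_eq_var t₁
      obtain ⟨q, rfl⟩ := term_eq_var t₂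
      simp only [BoundedFormula.realize_bdEqual, Term.realize_var, helim,
        Function.comp_apply]
      exact ⟨fun e => congrArg h e, hinj p q⟩
    | rel R ts =>
      have hts : (fun i => Term.realize (Sum.elim (h ∘ v) (h ∘ xs)) (ts i))
          = h ∘ (fun i => Term.realize (Sum.elim v xs) (ts i)) := by
        funext i
        obtain ⟨p, hp⟩ := term_eq_var (ts i)
        simp [hp, helim]
      simp only [BoundedFormula.realize_rel, hts]
      exact hrel _ R _

/-- If `𝔄` is a model of `∃z ∀x ∃ȳ ψ` with `z`-witness `a₀` of 1-type `π₀`, then the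
set `Φ` of 1-types realized in `𝔄` contains `π₀`, and for every `π ∈ Φ` there is a
`π`-witness for `π₀` and `ψ` (a structure of size `n+2` with designated elements of
types `π₀` and `π` satisfying `ψ`) all of whose elements realize 1-types in `Φ`. -/
theorem realized_types_closed (L : FirstOrder.Language) [L.IsRelational]
    [∀ k, Fintype (L.Relations k)] (n : ℕ)
    (ψ : L.Formula (Fin (n + 2))) (hψ : ψ.IsQF)
    (M : Type*) [L.Structure M] (a₀ : M)
    (hM : ∀ x : M, ∃ d : Fin n → M, ψ.Realize (Fin.cons a₀ (Fin.cons x d))) :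
    tp (L := L) a₀ ∈ {t | ∃ a : M, tp (L := L) a = t} ∧
    ∀ π ∈ {t | ∃ a : M, tp (L := L) a = t},
      ∃ (C : Type) (_ : L.Structure C) (_ : Fintype C),
        Fintype.card C = n + 2 ∧
        ∃ (cz cx : C) (cy : Fin n → C),
          tp (L := L) cz = tp (L := L) a₀ ∧ tp (L := L) cx = π ∧
          ψ.Realize (Fin.cons cz (Fin.cons cx cy)) ∧
          ∀ c : C, tp (L := L) c ∈ {t | ∃ a : M, tp (L := L) a = t} := by
  classical
  refine ⟨⟨a₀, rfl⟩, ?_⟩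
  rintro π ⟨a, rfl⟩
  obtain ⟨d, hd⟩ := hM a
  set g : Fin (n + 2) → M := Fin.cons a₀ (Fin.cons a d) with hg
  have hne : ∀ i : Fin (n + 2), (Finset.univ.filter (fun j => g j = g i)).Nonempty :=
    fun i => ⟨i, by simp⟩
  set r : Fin (n + 2) → Fin (n + 2) :=
    fun i => (Finset.univ.filter (fun j => g j = g i)).min' (hne i) with hr
  have hgr : ∀ i, g (r i) = g i := by
    intro i
    have := (Finset.univ.filter (fun j => g j = g i)).min'_mem (hne i)
    simpa using this
  have hreq : ∀ i j, g i = g j → r i = r j := by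
    intro i j hij
    simp only [hr, hij]
  have hrr : ∀ i, r (r i) = r i := fun i => hreq _ _ (hgr i)
  let C0 := {i : Fin (n + 2) // r i = i}
  have hm : Fintype.card C0 ≤ n + 2 := by
    simpa using Fintype.card_subtype_le (fun i : Fin (n + 2) => r i = i)
  let C : Type := C0 ⊕ Fin (n + 2 - Fintype.card C0)
  let h : C → M := Sum.elim (fun i => g i.1) (fun _ => a₀)
  letI instC : L.Structure C :=
    { funMap := fun f _ => isEmptyElim f
      RelMap := fun R w => RelMap R (h ∘ w) }
  have htp : ∀ c : C, tp (L := L) c = tp (L := L) (h c) := by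
    intro c; funext k R; rfl
  refine ⟨C, instC, inferInstance, ?_, ?_⟩
  · simp [C, Fintype.card_sum, Nat.add_sub_cancel' hm]
  · let emb : Fin (n + 2) → C := fun i => Sum.inl ⟨r i, hrr i⟩
    have h0 : h (emb 0) = a₀ := by
      show g (r 0) = a₀
      rw [hgr 0, hg]
      simp
    have h1 : h (emb 1) = a := by
      show g (r 1) = a
      rw [hgr 1, hg]
      rfl
    refine ⟨emb 0, emb 1, fun i => emb i.succ.succ, ?_, ?_, ?_, ?_⟩
    · rw [htp, h0]
    · rw [htp, h1]
    · have hcomp : Fin.cons (emb 0) (Fin.cons (emb 1) (fun i => emb i.succ.succ))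
          = fun i => emb i := by
        funext i
        refine Fin.cases rfl (fun j => ?_) i
        refine Fin.cases rfl (fun j' => rfl) j
      rw [hcomp]
      have hrel : ∀ (k : ℕ) (R : L.Relations k) (w : Fin k → C),
          RelMap R w ↔ RelMap R (h ∘ w) := fun _ _ _ => Iff.rfl
      have hinj : ∀ p q : Fin (n + 2) ⊕ Fin 0,
          h (Sum.elim (fun i => emb i) (default : Fin 0 → C) p)
            = h (Sum.elim (fun i => emb i) (default : Fin 0 → C) q)
          → Sum.elim (fun i => emb i) (default : Fin 0 → C) p
            = Sum.elim (fun i => emb i) (default : Fin 0 → C) q := by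
        rintro (p | p) (q | q) hpq
        · simp only [Sum.elim_inl] at hpq ⊢
          have h2 : r (r p) = r (r q) := hreq _ _ hpq
          rw [hrr, hrr] at h2
          exact congrArg Sum.inl (Subtype.ext h2)
        · exact isEmptyElim q
        · exact isEmptyElim p
        · exact isEmptyElim p
      refine (realize_pull (L := L) (C := C) (M := M) h hrel hψ
        (fun i => emb i) default hinj).mpr ?_
      have hcm : (h ∘ fun i => emb i) = g := by
        funext i; exact hgr i
      have hdef : (h ∘ (default : Fin 0 → C)) = (default : Fin 0 → M) := by
        funext i; exact isEmptyElim i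
      rw [hcm, hdef]
      exact hd
    · intro c
      rw [htp]
      exact ⟨h c, rfl⟩
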